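/- A metrizable topological group containing an f_1*-productive sequence contains a subspace homeomorphic to the Cantor set. -/

import Mathlib

open Filter Topology

def partProd {G : Type*} [Monoid G] (b : ℕ → G) (n : ℕ) : G :=
  ((List.range n).map b).prod

def F1StarProductive {G : Type*} [Group G] [TopologicalSpace G] (a : ℕ → G) : Prop :=
  Function.Injective a ∧
    ∀ μ : ℕ → ℕ, StrictMono μ →
      ∃ x : G, Tendsto (fun k => partProd (fun i => a (μ i)) (k + 1)) atTop (𝓝 x)

/-! ### Auxiliary list/product lemmas -/

section ListAux

variable {G : Type*} [Monoid G]

lemma partProd_add (b : ℕ → G) (m t : ℕ) :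
    partProd b (m + t) = partProd b m * ((List.range t).map (fun j => b (m + j))).prod := by
  simp [partProd, List.range_add, List.map_map, Function.comp_def]

lemma partProd_succ (b : ℕ → G) (n : ℕ) :
    partProd b (n + 1) = partProd b n * b n := by
  simp [partProd, List.range_succ]

lemma partProd_congr {b c : ℕ → G} {N : ℕ} (h : ∀ i < N, b i = c i) :
    partProd b N = partProd c N := by
  unfold partProd
  congr 1
  apply List.map_congr_left
  intro i hi
  exact h i (List.mem_range.mp hi)

lemma prod_range_getD (l : List ℕ) (g : ℕ → G) :
    ((List.range l.length).map (fun j => g (l.getD j 0))).prod = (l.map g).prod := by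
  induction l with
  | nil => simp
  | cons hd tl ih =>
    rw [List.length_cons, List.range_succ_eq_map, List.map_cons, List.prod_cons,
      List.map_map, List.map_cons, List.prod_cons]
    simp only [Function.comp_def, List.getD_cons_zero, Nat.succ_eq_add_one,
      List.getD_cons_succ]
    rw [ih]

lemma le_foldr_max {l : List ℕ} {m : ℕ} (hm : m ∈ l) : m ≤ l.foldr max 0 := by
  induction l with
  | nil => simp at hm
  | cons hd tl ih =>
    rcases List.mem_cons.mp hm with rfl | h
    · exact le_max_left _ _
    · exact le_trans (ih h) (le_max_right _ _)

end ListAux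

/-! ### Flattening a sequence of finite increasing lists into one strictly monotone map -/

section Flat

def flatLen (L : ℕ → List ℕ) (k : ℕ) : ℕ := ∑ j ∈ Finset.range k, (L j).length

def blk (L : ℕ → List ℕ) (n : ℕ) : ℕ := Nat.findGreatest (fun k => flatLen L k ≤ n) n

def flat (L : ℕ → List ℕ) (n : ℕ) : ℕ := (L (blk L n)).getD (n - flatLen L (blk L n)) 0

variable {L : ℕ → List ℕ}

lemma flatLen_succ (k : ℕ) : flatLen L (k + 1) = flatLen L k + (L k).length :=
  Finset.sum_range_succ _ _

lemma flatLen_mono : Monotone (flatLen L) := by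
  intro i j hij
  exact Finset.sum_le_sum_of_subset (Finset.range_subset_range.mpr hij)

variable (hlen : ∀ k, L k ≠ [])
include hlen

lemma le_flatLen (k : ℕ) : k ≤ flatLen L k := by
  induction k with
  | zero => simp
  | succ k ih =>
    have := List.length_pos_iff.mpr (hlen k)
    rw [flatLen_succ]
    omega

lemma flatLen_blk_le (n : ℕ) : flatLen L (blk L n) ≤ n := by
  exact Nat.findGreatest_spec (P := fun k => flatLen L k ≤ n) (Nat.zero_le n)
    (by simp [flatLen])

lemma lt_flatLen_blk_succ (n : ℕ) : n < flatLen L (blk L n + 1) := by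
  by_contra h
  push_neg at h
  exact Nat.findGreatest_is_greatest (Nat.lt_succ_self _)
    (le_trans (le_flatLen hlen _) h) h

lemma blk_eq {k n : ℕ} (h1 : flatLen L k ≤ n) (h2 : n < flatLen L (k + 1)) :
    blk L n = k := by
  rcases lt_trichotomy (blk L n) k with h | h | h
  · exfalso
    have : flatLen L (blk L n + 1) ≤ flatLen L k := flatLen_mono (by omega)
    have := lt_flatLen_blk_succ hlen n
    omega
  · exact h
  · exfalso
    have : flatLen L (k + 1) ≤ flatLen L (blk L n) := flatLen_mono (by omega)
    have := flatLen_blk_le hlen n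
    omega

lemma off_lt (n : ℕ) : n - flatLen L (blk L n) < (L (blk L n)).length := by
  have h1 := flatLen_blk_le hlen n
  have h2 := lt_flatLen_blk_succ hlen n
  rw [flatLen_succ] at h2
  omega

lemma flat_mem (n : ℕ) : flat L n ∈ L (blk L n) := by
  rw [flat, List.getD_eq_getElem _ _ (off_lt hlen n)]
  exact List.getElem_mem _

lemma blk_flatLen_add {k j : ℕ} (hj : j < (L k).length) :
    blk L (flatLen L k + j) = k :=
  blk_eq hlen (Nat.le_add_right _ _) (by rw [flatLen_succ]; omega)

lemma flat_flatLen_add {k j : ℕ} (hj : j < (L k).length) :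
    flat L (flatLen L k + j) = (L k).getD j 0 := by
  rw [flat, blk_flatLen_add hlen hj]
  congr 1
  omega

lemma flat_strictMono (hpair : ∀ k, (L k).Pairwise (· < ·))
    (hsep : ∀ k, ∀ m ∈ L k, ∀ m' ∈ L (k + 1), m < m') : StrictMono (flat L) := by
  apply strictMono_nat_of_lt_succ
  intro n
  have h1 := flatLen_blk_le hlen n
  have h2 := lt_flatLen_blk_succ hlen n
  by_cases hc : n + 1 < flatLen L (blk L n + 1)
  · have hb : blk L (n + 1) = blk L n := blk_eq hlen (by omega) hc
    have hlt2 : n + 1 - flatLen L (blk L n) < (L (blk L n)).length := by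
      rw [flatLen_succ] at hc; omega
    have hlt1 : n - flatLen L (blk L n) < (L (blk L n)).length := by omega
    rw [flat, flat, hb, List.getD_eq_get (i := ⟨_, hlt1⟩), List.getD_eq_get (i := ⟨_, hlt2⟩)]
    apply List.pairwise_iff_get.mp (hpair (blk L n))
    simp only [Fin.lt_def]
    omega
  · have he : n + 1 = flatLen L (blk L n + 1) := by omega
    have hb : blk L (n + 1) = blk L n + 1 := by
      apply blk_eq hlen (by omega)
      rw [flatLen_succ (blk L n + 1)]
      have := List.length_pos_iff.mpr (hlen (blk L n + 1))
      omega
    have m1 : flat L n ∈ L (blk L n) := flat_mem hlen n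
    have m2 : flat L (n + 1) ∈ L (blk L n + 1) := by
      have := flat_mem hlen (n + 1)
      rwa [hb] at this
    exact hsep _ _ m1 _ m2

lemma partProd_flat_succ {G : Type*} [Monoid G] (g : ℕ → G) (k : ℕ) :
    partProd (fun i => g (flat L i)) (flatLen L (k + 1)) =
      partProd (fun i => g (flat L i)) (flatLen L k) * ((L k).map g).prod := by
  rw [flatLen_succ, partProd_add]
  congr 1
  rw [← prod_range_getD (L k) g]
  congr 1
  apply List.map_congr_left
  intro j hj
  rw [flat_flatLen_add hlen (List.mem_range.mp hj)]

end Flat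

/-! ### Tail smallness -/

def iterList (l : ℕ → List ℕ) : ℕ → List ℕ
  | 0 => l 0
  | k + 1 => l ((iterList l k).foldr max 0 + 1)

section TailSmall

variable {G : Type*} [Group G] [TopologicalSpace G] [IsTopologicalGroup G]

set_option maxHeartbeats 1000000 in
lemma tailSmall {a : ℕ → G} (ha : F1StarProductive a) {U : Set G} (hU : U ∈ 𝓝 (1 : G)) :
    ∃ N : ℕ, ∀ l : List ℕ, l.Pairwise (· < ·) → (∀ m ∈ l, N ≤ m) →
      (l.map a).prod ∈ U := by
  by_contra hcon
  push_neg at hcon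
  choose l hp hge hnU using hcon
  set L : ℕ → List ℕ := iterList l with hL
  have hLsucc : ∀ k, L (k + 1) = l ((L k).foldr max 0 + 1) := fun k => rfl
  have hLp : ∀ k, (L k).Pairwise (· < ·) := by
    intro k; cases k with
    | zero => exact hp 0
    | succ k => rw [hLsucc]; exact hp _
  have hLnU : ∀ k, ((L k).map a).prod ∉ U := by
    intro k; cases k with
    | zero => exact hnU 0
    | succ k => rw [hLsucc]; exact hnU _
  have hlen : ∀ k, L k ≠ [] := by
    intro k hnil
    apply hLnU k
    rw [hnil]
    simpa using mem_of_mem_nhds hU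
  have hsep : ∀ k, ∀ m ∈ L k, ∀ m' ∈ L (k + 1), m < m' := by
    intro k m hm m' hm'
    have h1 : (L k).foldr max 0 + 1 ≤ m' := by
      have := hge ((L k).foldr max 0 + 1) m' (by rw [← hLsucc]; exact hm')
      exact this
    have h2 : m ≤ (L k).foldr max 0 := le_foldr_max hm
    omega
  have hμ : StrictMono (flat L) := flat_strictMono hlen hLp hsep
  obtain ⟨x, hx⟩ := ha.2 (flat L) hμ
  have hx' : Tendsto (fun k => partProd (fun i => a (flat L i)) k) atTop (𝓝 x) :=
    (tendsto_add_atTop_iff_nat 1).mp hx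
  have hflatTop : Tendsto (fun k => flatLen L k) atTop atTop :=
    tendsto_atTop_mono (fun k => le_flatLen hlen k) tendsto_id
  have hP : Tendsto (fun k => partProd (fun i => a (flat L i)) (flatLen L k)) atTop (𝓝 x) :=
    hx'.comp hflatTop
  have hP1 : Tendsto (fun k => partProd (fun i => a (flat L i)) (flatLen L (k + 1)))
      atTop (𝓝 x) := (tendsto_add_atTop_iff_nat 1).mpr hP
  have hQ : Tendsto (fun k => (partProd (fun i => a (flat L i)) (flatLen L k))⁻¹ *
      partProd (fun i => a (flat L i)) (flatLen L (k + 1))) atTop (𝓝 (x⁻¹ * x)) :=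
    hP.inv.mul hP1
  rw [inv_mul_cancel] at hQ
  have heq : ∀ k, (partProd (fun i => a (flat L i)) (flatLen L k))⁻¹ *
      partProd (fun i => a (flat L i)) (flatLen L (k + 1)) = ((L k).map a).prod := by
    intro k
    rw [partProd_flat_succ hlen, inv_mul_cancel_left]
  have hQ' : Tendsto (fun k => ((L k).map a).prod) atTop (𝓝 (1 : G)) := by
    simpa only [heq] using hQ
  obtain ⟨k, hk⟩ := (hQ'.eventually_mem hU).exists
  exact hLnU k hk

end TailSmall

/-! ### The map from the Cantor set -/

section PhiSection

def mux (x : ℕ → Bool) (n : ℕ) : ℕ := if x n then 2 * n else 2 * n + 1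

lemma mux_strictMono (x : ℕ → Bool) : StrictMono (mux x) := by
  apply strictMono_nat_of_lt_succ
  intro n
  unfold mux
  split_ifs <;> omega

lemma mux_ge (x : ℕ → Bool) (n : ℕ) : n ≤ mux x n := by
  unfold mux; split_ifs <;> omega

lemma mux_congr {x y : ℕ → Bool} {n : ℕ} (h : x n = y n) : mux x n = mux y n := by
  unfold mux; rw [h]

variable {G : Type*} [Group G] [TopologicalSpace G] [IsTopologicalGroup G]
variable {a : ℕ → G}

noncomputable def Phi (a : ℕ → G) (ha : F1StarProductive a) (x : ℕ → Bool) : G :=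
  (ha.2 (mux x) (mux_strictMono x)).choose

lemma Phi_tendsto (ha : F1StarProductive a) (x : ℕ → Bool) :
    Tendsto (fun k => partProd (fun i => a (mux x i)) k) atTop (𝓝 (Phi a ha x)) :=
  (tendsto_add_atTop_iff_nat 1).mp (ha.2 (mux x) (mux_strictMono x)).choose_spec

lemma tail_tendsto (ha : F1StarProductive a) (x : ℕ → Bool) (N : ℕ) :
    Tendsto (fun t => ((List.range t).map (fun j => a (mux x (N + j)))).prod) atTop
      (𝓝 ((partProd (fun i => a (mux x i)) N)⁻¹ * Phi a ha x)) := by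
  have h0 : Tendsto (fun t : ℕ => N + t) atTop atTop :=
    tendsto_atTop_mono (fun t => Nat.le_add_left t N) tendsto_id
  have h1 : Tendsto (fun t => partProd (fun i => a (mux x i)) (N + t)) atTop
      (𝓝 (Phi a ha x)) := (Phi_tendsto ha x).comp h0
  have h2 := (tendsto_const_nhds
    (x := (partProd (fun i => a (mux x i)) N)⁻¹) (f := atTop)).mul h1
  convert h2 using 2 with t
  rw [partProd_add, inv_mul_cancel_left]

lemma pairwise_tail_list (x : ℕ → Bool) (N t : ℕ) :
    ((List.range t).map (fun j => mux x (N + j))).Pairwise (· < ·) :=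
  (List.pairwise_lt_range (n := t)).map _
    (fun _ _ hij => mux_strictMono x (by omega))

lemma prefix_eq {x y : ℕ → Bool} {N : ℕ} (h : ∀ i < N, x i = y i) :
    partProd (fun i => a (mux x i)) N = partProd (fun i => a (mux y i)) N :=
  partProd_congr (fun i hi => by rw [mux_congr (h i hi)])

/-- Continuity of the Cantor map. -/
lemma Phi_continuous [T3Space G] (ha : F1StarProductive a) :
    Continuous (Phi a ha) := by
  rw [continuous_iff_continuousAt]
  intro x
  intro W hW
  rw [Filter.mem_map]
  -- choose V with the two-variable continuity property
  have hg : Continuous (fun uv : G × G => Phi a ha x * uv.1⁻¹ * uv.2) := by fun_prop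
  have hWpre : (fun uv : G × G => Phi a ha x * uv.1⁻¹ * uv.2) ⁻¹' W ∈ 𝓝 ((1 : G), (1 : G)) := by
    apply hg.continuousAt.preimage_mem_nhds
    simpa using hW
  rw [mem_nhds_prod_iff] at hWpre
  obtain ⟨V₁, hV₁, V₂, hV₂, hVsub⟩ := hWpre
  obtain ⟨V, hVnhds, hVclosed, hVsub'⟩ :=
    exists_mem_nhds_isClosed_subset (inter_mem hV₁ hV₂)
  obtain ⟨N, hN⟩ := tailSmall ha hVnhds
  -- tail limits lie in V
  have htail : ∀ y : ℕ → Bool, (partProd (fun i => a (mux y i)) N)⁻¹ * Phi a ha y ∈ V := by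
    intro y
    apply hVclosed.mem_of_tendsto (tail_tendsto ha y N)
    apply Filter.Eventually.of_forall
    intro t
    have : ((List.range t).map (fun j => a (mux y (N + j)))).prod =
        (((List.range t).map (fun j => mux y (N + j))).map a).prod := by
      rw [List.map_map]; rfl
    rw [this]
    apply hN _ (pairwise_tail_list y N t)
    intro m hm
    simp only [List.mem_map, List.mem_range] at hm
    obtain ⟨j, _, rfl⟩ := hm
    exact le_trans (by omega) (mux_ge y (N + j))
  refine mem_of_superset (set_pi_mem_nhds (Set.finite_Iio N)
    (fun i _ => IsOpen.mem_nhds (isOpen_discrete {x i}) rfl)) ?_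
  intro y hy
  have hagree : ∀ i < N, y i = x i := by
    intro i hi
    exact hy i hi
  have hyW : Phi a ha y =
      Phi a ha x * ((partProd (fun i => a (mux x i)) N)⁻¹ * Phi a ha x)⁻¹ *
        ((partProd (fun i => a (mux y i)) N)⁻¹ * Phi a ha y) := by
    rw [mul_inv_rev, inv_inv]
    rw [prefix_eq (a := a) (fun i hi => (hagree i hi).symm)]
    group
  show Phi a ha y ∈ W
  rw [hyW]
  exact hVsub (Set.mk_mem_prod (hVsub' (htail x)).1 (hVsub' (htail y)).2)

/-- If `Phi` takes the same value on two points differing in exactly one coordinate,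
then `a` is not injective. -/
lemma Phi_flip [T2Space G] (ha : F1StarProductive a) {x z : ℕ → Bool} {m : ℕ}
    (hne : x m ≠ z m) (hag : ∀ i ≠ m, x i = z i) (hPhi : Phi a ha x = Phi a ha z) :
    False := by
  have htails : (fun t => ((List.range t).map (fun j => a (mux x (m + 1 + j)))).prod) =
      (fun t => ((List.range t).map (fun j => a (mux z (m + 1 + j)))).prod) := by
    funext t
    congr 1
    apply List.map_congr_left
    intro j _
    rw [mux_congr (hag (m + 1 + j) (by omega))]
  have huniq : (partProd (fun i => a (mux x i)) (m + 1))⁻¹ * Phi a ha x =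
      (partProd (fun i => a (mux z i)) (m + 1))⁻¹ * Phi a ha z := by
    apply tendsto_nhds_unique (tail_tendsto ha x (m + 1))
    rw [htails]
    exact tail_tendsto ha z (m + 1)
  rw [hPhi] at huniq
  have hpp : partProd (fun i => a (mux x i)) (m + 1) =
      partProd (fun i => a (mux z i)) (m + 1) := by
    have := mul_right_cancel huniq
    exact inv_injective this
  rw [partProd_succ, partProd_succ,
    prefix_eq (a := a) (fun i hi => hag i (by omega))] at hpp
  have hmux : mux x m = mux z m := ha.1 (mul_left_cancel hpp)
  apply hne
  unfold mux at hmux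
  rcases hx : x m <;> rcases hz : z m <;> simp_all <;> omega

end PhiSection

/-- A metrizable topological group containing an `f_1*`-productive sequence contains a
subspace homeomorphic to the Cantor set `2^ℕ`. -/
theorem stmt_14 {G : Type*} [Group G] [TopologicalSpace G] [IsTopologicalGroup G]
    [TopologicalSpace.MetrizableSpace G]
    (a : ℕ → G) (ha : F1StarProductive a) :
    ∃ s : Set G, Nonempty (s ≃ₜ (ℕ → Bool)) := by
  letI : MetricSpace G := TopologicalSpace.metrizableSpaceMetric G
  have hcont : Continuous (Phi a ha) := Phi_continuous ha
  set K : Set G := Set.range (Phi a ha) with hK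
  -- The range of Phi is uncountable.
  have hunc : ¬K.Countable := by
    intro hKc
    haveI : Countable ↥K := hKc.to_subtype
    have hcover : ⋃ c : ↥K, Phi a ha ⁻¹' {(c : G)} = Set.univ := by
      ext x
      simp only [Set.mem_iUnion, Set.mem_univ, iff_true, Set.mem_preimage,
        Set.mem_singleton_iff]
      exact ⟨⟨Phi a ha x, Set.mem_range_self x⟩, rfl⟩
    obtain ⟨c, hc⟩ := nonempty_interior_of_iUnion_of_closed
      (fun c : ↥K => (isClosed_singleton.preimage hcont)) hcover
    obtain ⟨y, hy⟩ := hc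
    obtain ⟨I, u, hu, hsub⟩ := isOpen_pi_iff.mp isOpen_interior y hy
    set m : ℕ := (I.sup id) + 1 with hm
    have hmI : m ∉ I := by
      intro hmem
      have : m ≤ I.sup id := Finset.le_sup (f := id) hmem
      omega
    set z : ℕ → Bool := Function.update y m (!(y m)) with hz
    have hzpi : z ∈ ((I : Set ℕ)).pi u := by
      intro i hi
      have hiI : i ∈ I := hi
      have hne : i ≠ m := fun h => hmI (h ▸ hiI)
      rw [hz, Function.update_of_ne hne]
      exact (hu i hiI).2
    have hypi : y ∈ ((I : Set ℕ)).pi u := fun i hi => (hu i hi).2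
    have hyc : Phi a ha y = (c : G) := by
      have h' := interior_subset (hsub hypi)
      simpa using h'
    have hzc : Phi a ha z = (c : G) := by
      have h' := interior_subset (hsub hzpi)
      simpa using h'
    apply Phi_flip ha (x := y) (z := z) (m := m)
    · rw [hz, Function.update_self]
      exact (Bool.not_ne_self (y m)).symm
    · intro i hi
      rw [hz, Function.update_of_ne hi]
    · rw [hyc, hzc]
  -- K is compact, hence a Polish subspace.
  have hKcomp : IsCompact K := isCompact_range hcont
  haveI : CompactSpace ↥K := isCompact_iff_compactSpace.mp hKcomp
  haveI : PolishSpace ↥K := inferInstance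
  have huncK : ¬(Set.univ : Set ↥K).Countable := by
    rw [Set.countable_univ_iff, Set.countable_coe_iff]
    exact hunc
  obtain ⟨f, -, hfc, hfi⟩ :=
    IsClosed.exists_nat_bool_injection_of_not_countable isClosed_univ huncK
  set g : (ℕ → Bool) → G := fun p => (f p).val with hg
  have hgc : Continuous g := continuous_subtype_val.comp hfc
  have hgi : Function.Injective g := Subtype.val_injective.comp hfi
  have hcont' : Continuous fun p => (⟨g p, Set.mem_range_self p⟩ : ↥(Set.range g)) :=
    hgc.subtype_mk _
  have homeo : (ℕ → Bool) ≃ₜ ↥(Set.range g) :=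
    Continuous.homeoOfEquivCompactToT2 (f := Equiv.ofInjective g hgi) hcont'
  exact ⟨Set.range g, ⟨homeo.symm⟩⟩
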